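/- arXiv:2011.08888 — 7 statements merged into one kernel-verified Lean document; each statement's English description precedes it below -/
import Mathlib

section
/- For natural numbers N, k, n with 1 ≤ k ≤ N and 1 ≤ n ≤ N, one has ∑_{j=1}^{n-1} (k falling factorial j)/(N falling factorial j) = k/(N-k+1) - ((N-n+1)/(N-k+1)) · (k falling factorial n)/(N falling factorial n), where the empty sum (n=1) is 0 and x falling factorial j := x(x-1)⋯(x-j+1). -/
private lemma ffsi_aux (N k : ℕ) (hk1 : 1 ≤ k) (hkN : k ≤ N) :
    ∀ m : ℕ, m + 1 ≤ N →
    ∑ j ∈ Finset.Icc 1 m,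
        (Nat.descFactorial k j : ℝ) / (Nat.descFactorial N j)
      = (k : ℝ) / ((N : ℝ) - k + 1)
        - (((N : ℝ) - m) / ((N : ℝ) - k + 1))
            * ((Nat.descFactorial k (m + 1) : ℝ) / (Nat.descFactorial N (m + 1))) := by
  have hNk : ((N : ℝ) - k + 1) ≠ 0 := by
    have : (k : ℝ) ≤ N := by exact_mod_cast hkN
    linarith
  intro m
  induction m with
  | zero =>
    intro h
    have hN0 : (N : ℝ) ≠ 0 := by
      have : 1 ≤ N := h
      positivity
    simp [Nat.descFactorial]
    field_simp
    ring
  | succ m ih =>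
    intro h
    have hmN : m + 1 ≤ N := by omega
    have ih' := ih hmN
    rw [Finset.sum_Icc_succ_top (by omega : 1 ≤ m + 1), ih']
    have hb : (0 : ℝ) < (Nat.descFactorial N (m + 1) : ℝ) := by
      have : N.descFactorial (m + 1) ≠ 0 := by
        rw [Ne, Nat.descFactorial_eq_zero_iff_lt]; omega
      exact_mod_cast Nat.pos_of_ne_zero this
    have hNsub : ((N - (m + 1) : ℕ) : ℝ) = (N : ℝ) - (m + 1) := by
      push_cast [Nat.cast_sub hmN]; ring
    have hNd : (Nat.descFactorial N (m + 2) : ℝ)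
        = ((N : ℝ) - (m + 1)) * (Nat.descFactorial N (m + 1) : ℝ) := by
      rw [Nat.descFactorial_succ]; push_cast [hNsub]; ring
    have hNm : ((N : ℝ) - (m + 1)) ≠ 0 := by
      have : (m + 2 : ℝ) ≤ N := by exact_mod_cast h
      push_cast; linarith
    set A := (Nat.descFactorial k (m + 1) : ℝ) with hA
    set B := (Nat.descFactorial N (m + 1) : ℝ) with hB
    have hB0 : B ≠ 0 := ne_of_gt hb
    by_cases hkd : Nat.descFactorial k (m + 1) = 0
    · have hkd2 : (Nat.descFactorial k (m + 1 + 1) : ℝ) = 0 := by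
        rw [Nat.descFactorial_succ, hkd, Nat.mul_zero, Nat.cast_zero]
      have hA0 : A = 0 := by rw [hA, hkd, Nat.cast_zero]
      rw [hkd2, hA0]
      simp
    · have hmk : m + 1 ≤ k := by
        by_contra hc
        exact hkd (Nat.descFactorial_eq_zero_iff_lt.mpr (by omega))
      have hkd' : (Nat.descFactorial k (m + 1 + 1) : ℝ)
          = ((k : ℝ) - (m + 1)) * A := by
        rw [Nat.descFactorial_succ, Nat.cast_mul, hA, Nat.cast_sub hmk]
        push_cast; ring
      have hNd' : (Nat.descFactorial N (m + 1 + 1) : ℝ)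
          = ((N : ℝ) - (m + 1)) * B := by
        rw [Nat.descFactorial_succ, Nat.cast_mul, hB, hNsub]
      rw [hkd', hNd']
      push_cast
      field_simp
      ring

/-- Auxiliary lemma (Lemma 6.1 in the paper): for `1 ≤ k ≤ N` and `1 ≤ n ≤ N`,
`∑_{j=1}^{n-1} k^{\underline j}/N^{\underline j}
  = k/(N-k+1) - ((N-n+1)/(N-k+1)) · k^{\underline n}/N^{\underline n}`. -/
theorem falling_factorial_sum_identity (N k n : ℕ)
    (hk1 : 1 ≤ k) (hkN : k ≤ N) (hn1 : 1 ≤ n) (hnN : n ≤ N) :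
    ∑ j ∈ Finset.Icc 1 (n - 1),
        (Nat.descFactorial k j : ℝ) / (Nat.descFactorial N j)
      = (k : ℝ) / ((N : ℝ) - k + 1)
        - (((N : ℝ) - n + 1) / ((N : ℝ) - k + 1))
            * ((Nat.descFactorial k n : ℝ) / (Nat.descFactorial N n)) := by
  obtain ⟨m, rfl⟩ : ∃ m, n = m + 1 := ⟨n - 1, by omega⟩
  have := ffsi_aux N k hk1 hkN m (by omega)
  simpa [Nat.add_sub_cancel, sub_add_eq_sub_sub] using this
end

section
/- Let Y be the continuous-time Markov chain on {0,…,N} with generator 𝒜 f(k) = k((N-k)/N)[f(k+1)-f(k)] + k((N-k)/N + ∑_{m≥1} s_m(1-(k/N)^m))[f(k-1)-f(k)] (no mutation, u = 0), and let R be the continuous-time Markov chain on {0,…,N} with generator ℬ g(n) = n((n-1)/N)[g(n-1)-g(n)] + ∑_{m≥1} s_m (n/N^m) ∑_{j=1}^{m} (N-n)^{\underline{j}} C^n_{mj} [g(n+j)-g(n)], where C^n_{mj} = ∑_{ℓ=j}^m binom(m,ℓ) S(ℓ,j) n^{m-ℓ}. Then for the function H(k,n) = k^{\underline{n}}/N^{\underline{n}},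 one has 𝒜 H(·,n)(k) = ℬ H(k,·)(n) for all k, n ∈ {0,…,N}. -/
/-- Stirling numbers of the second kind. -/
def stirling2 : ℕ → ℕ → ℕ
  | 0, 0 => 1
  | 0, _ + 1 => 0
  | _ + 1, 0 => 0
  | n + 1, j + 1 => (j + 1) * stirling2 n (j + 1) + stirling2 n j

/-- `C^n_{mj} = ∑_{ℓ=j}^m binom(m,ℓ) S(ℓ,j) n^{m-ℓ}`. -/
def Cnmj (n m j : ℕ) : ℕ :=
  ∑ ℓ ∈ Finset.Icc j m, Nat.choose m ℓ * stirling2 ℓ j * n ^ (m - ℓ)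

/-- The hypergeometric duality function `H(k,n) = k^{\underline n}/N^{\underline n}`. -/
noncomputable def Hdual (N k n : ℕ) : ℝ :=
  (Nat.descFactorial k n : ℝ) / (Nat.descFactorial N n)

lemma stirling2_eq_zero_of_lt : ∀ {n j : ℕ}, n < j → stirling2 n j = 0
  | 0, j + 1, _ => rfl
  | n + 1, j + 1, h => by
    have h1 : n < j + 1 := by omega
    have h2 : n < j := by omega
    simp [stirling2, stirling2_eq_zero_of_lt h1, stirling2_eq_zero_of_lt h2]

lemma stirling2_zero_right : ∀ n, stirling2 n 0 = if n = 0 then 1 else 0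
  | 0 => rfl
  | _ + 1 => rfl

lemma descFactorial_mul_self (x j : ℕ) :
    x * x.descFactorial j = x.descFactorial (j + 1) + j * x.descFactorial j := by
  rcases Nat.lt_or_ge x j with h | h
  · simp [Nat.descFactorial_eq_zero_iff_lt.2 h,
      Nat.descFactorial_eq_zero_iff_lt.2 (Nat.lt_succ_of_lt h)]
  · rw [Nat.descFactorial_succ, ← Nat.add_mul, Nat.sub_add_cancel h]

lemma pow_eq_sum_stirling (x : ℕ) : ∀ ℓ : ℕ,
    x ^ ℓ = ∑ j ∈ Finset.range (ℓ + 1), stirling2 ℓ j * x.descFactorial j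
  | 0 => by simp [stirling2]
  | ℓ + 1 => by
    have IH := pow_eq_sum_stirling x ℓ
    calc x ^ (ℓ + 1) = x ^ ℓ * x := by ring
      _ = ∑ j ∈ Finset.range (ℓ + 1), stirling2 ℓ j * (x * x.descFactorial j) := by
          rw [IH, Finset.sum_mul]; apply Finset.sum_congr rfl; intro j _; ring
      _ = ∑ j ∈ Finset.range (ℓ + 1),
            (stirling2 ℓ j * x.descFactorial (j + 1) + j * stirling2 ℓ j * x.descFactorial j) := by
          apply Finset.sum_congr rfl; intro j _; rw [descFactorial_mul_self]; ring
      _ = ∑ j ∈ Finset.range (ℓ + 2), stirling2 (ℓ + 1) j * x.descFactorial j := by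
          rw [Finset.sum_add_distrib, Finset.sum_range_succ' (fun j => stirling2 (ℓ+1) j * x.descFactorial j) (ℓ+1)]
          have h0 : stirling2 (ℓ + 1) 0 * x.descFactorial 0 = 0 := by
            simp [stirling2_zero_right]
          rw [h0, add_zero]
          have : ∀ j, stirling2 (ℓ + 1) (j + 1) = (j + 1) * stirling2 ℓ (j + 1) + stirling2 ℓ j := fun j => rfl
          rw [show (∑ j ∈ Finset.range (ℓ+1), stirling2 (ℓ+1) (j+1) * x.descFactorial (j+1))
              = ∑ j ∈ Finset.range (ℓ+1), ((j+1) * stirling2 ℓ (j+1) * x.descFactorial (j+1)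
                + stirling2 ℓ j * x.descFactorial (j+1)) from
            Finset.sum_congr rfl (fun j _ => by rw [this]; ring)]
          rw [Finset.sum_add_distrib]
          have key : (∑ j ∈ Finset.range (ℓ+1), j * stirling2 ℓ j * x.descFactorial j)
              = ∑ j ∈ Finset.range (ℓ+1), (j+1) * stirling2 ℓ (j+1) * x.descFactorial (j+1) := by
            rw [Finset.sum_range_succ' (fun j => j * stirling2 ℓ j * x.descFactorial j) ℓ,
              Finset.sum_range_succ (fun j => (j+1) * stirling2 ℓ (j+1) * x.descFactorial (j+1)) ℓ]
            simp [stirling2_eq_zero_of_lt (Nat.lt_succ_self ℓ)]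
          rw [key, add_comm]

lemma descFactorial_add' (x : ℕ) : ∀ (a b : ℕ),
    x.descFactorial (a + b) = x.descFactorial a * (x - a).descFactorial b
  | a, 0 => by simp
  | a, b + 1 => by
    rw [show a + (b + 1) = (a + b) + 1 from rfl, Nat.descFactorial_succ,
      descFactorial_add' x a b, Nat.descFactorial_succ, Nat.sub_sub]
    ring

lemma Cnmj_zero (n m : ℕ) : Cnmj n m 0 = n ^ m := by
  unfold Cnmj
  rw [show Finset.Icc 0 m = Finset.range (m + 1) by
    ext a; simp [Nat.lt_succ_iff]]
  rw [Finset.sum_range_succ' (fun ℓ => Nat.choose m ℓ * stirling2 ℓ 0 * n ^ (m - ℓ)) m]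
  have : ∀ i ∈ Finset.range m, Nat.choose m (i+1) * stirling2 (i+1) 0 * n ^ (m - (i+1)) = 0 := by
    intro i _; simp [stirling2_zero_right]
  rw [Finset.sum_congr rfl this]
  simp [stirling2]

lemma sum_Cnmj (n m x : ℕ) :
    n ^ m + ∑ j ∈ Finset.Icc 1 m, Cnmj n m j * x.descFactorial j = (x + n) ^ m := by
  have key : (x + n) ^ m = ∑ j ∈ Finset.range (m + 1), Cnmj n m j * x.descFactorial j := by
    rw [add_pow x n m]
    simp only [Nat.cast_id]
    have step1 : ∀ ℓ ∈ Finset.range (m + 1),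
        x ^ ℓ * n ^ (m - ℓ) * Nat.choose m ℓ
          = ∑ j ∈ Finset.range (m + 1), Nat.choose m ℓ * stirling2 ℓ j * n ^ (m - ℓ) * x.descFactorial j := by
      intro ℓ hℓ
      rw [pow_eq_sum_stirling x ℓ, Finset.sum_mul, Finset.sum_mul]
      rw [← Finset.sum_subset (Finset.range_subset_range.2 (by
        simp only [Finset.mem_range] at hℓ; omega : ℓ + 1 ≤ m + 1))]
      · apply Finset.sum_congr rfl; intro j _; ring
      · intro j _ hj
        simp only [Finset.mem_range, not_lt] at hj
        simp [stirling2_eq_zero_of_lt (by omega : ℓ < j)]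
    rw [Finset.sum_congr rfl step1, Finset.sum_comm]
    apply Finset.sum_congr rfl
    intro j hj
    simp only [Finset.mem_range] at hj
    unfold Cnmj
    rw [Finset.sum_mul]
    symm
    apply Finset.sum_subset
    · intro ℓ hℓ; simp only [Finset.mem_Icc] at hℓ; simp [Finset.mem_range]; omega
    · intro ℓ hℓ hℓ'
      simp only [Finset.mem_range] at hℓ
      simp only [Finset.mem_Icc, not_and, not_le] at hℓ'
      have : ℓ < j := by omega
      simp [stirling2_eq_zero_of_lt this]
  rw [key, Finset.sum_range_succ' (fun j => Cnmj n m j * x.descFactorial j) m]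
  rw [Cnmj_zero]
  have : (∑ i ∈ Finset.range m, Cnmj n m (i+1) * x.descFactorial (i+1))
      = ∑ j ∈ Finset.Icc 1 m, Cnmj n m j * x.descFactorial j := by
    rw [← Finset.Ico_add_one_right_eq_Icc, Finset.sum_Ico_eq_sum_range]
    apply Finset.sum_congr (by norm_num) (fun i _ => by rw [add_comm 1 i])
  rw [this]; simp [add_comm]

lemma cast_descFactorial_succ (k n : ℕ) :
    (Nat.descFactorial k (n + 1) : ℝ) = ((k : ℝ) - n) * Nat.descFactorial k n := by
  rcases Nat.lt_or_ge k n with h | h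
  · simp [Nat.descFactorial_eq_zero_iff_lt.2 h,
      Nat.descFactorial_eq_zero_iff_lt.2 (Nat.lt_succ_of_lt h)]
  · rw [Nat.descFactorial_succ]
    push_cast [h]
    ring

lemma cast_mul_descFactorial_pred (k j : ℕ) :
    (k : ℝ) * (Nat.descFactorial (k - 1) j : ℝ) = ((k : ℝ) - j) * Nat.descFactorial k j := by
  rcases k with _ | k'
  · rcases j with _ | j'
    · norm_num
    · have h0 : Nat.descFactorial 0 (j' + 1) = 0 :=
        Nat.descFactorial_eq_zero_iff_lt.2 (Nat.succ_pos j')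
      rw [show (0:ℕ) - 1 = 0 from rfl, h0]
      norm_num
  · have h : Nat.descFactorial (k' + 1) (j + 1) = (k' + 1) * Nat.descFactorial k' j :=
      Nat.succ_descFactorial_succ k' j
    have := cast_descFactorial_succ (k' + 1) j
    rw [h] at this
    push_cast at this ⊢
    linarith [this]

lemma descFactorial_N_ne_zero {N n : ℕ} (hn : n ≤ N) : (Nat.descFactorial N n : ℝ) ≠ 0 := by
  have : Nat.descFactorial N n ≠ 0 := by
    intro h; exact absurd (Nat.descFactorial_eq_zero_iff_lt.1 h) (not_lt.2 hn)
  exact_mod_cast this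

lemma coef_Hdual (N k n j : ℕ) (hn : n ≤ N) (hk : k ≤ N) :
    (Nat.descFactorial (N - n) j : ℝ) * Hdual N k (n + j)
      = (Nat.descFactorial k (n + j) : ℝ) / (Nat.descFactorial N n : ℝ) := by
  unfold Hdual
  rcases eq_or_ne (Nat.descFactorial (N - n) j) 0 with h0 | h0
  · have hlt : N - n < j := Nat.descFactorial_eq_zero_iff_lt.1 h0
    have : k < n + j := by omega
    rw [h0, Nat.descFactorial_eq_zero_iff_lt.2 this]
    simp
  · have hA : Nat.descFactorial N (n + j)
        = Nat.descFactorial N n * Nat.descFactorial (N - n) j := descFactorial_add' N n j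
    rw [hA]
    have h1 : (Nat.descFactorial (N - n) j : ℝ) ≠ 0 := by exact_mod_cast h0
    have h2 := descFactorial_N_ne_zero hn
    push_cast
    field_simp

lemma k_mul_Hdiff (N k n : ℕ) (hn : n ≤ N) :
    (k : ℝ) * (Hdual N (k - 1) n - Hdual N k n)
      = -(n : ℝ) * (Nat.descFactorial k n : ℝ) / (Nat.descFactorial N n : ℝ) := by
  unfold Hdual
  have hD := descFactorial_N_ne_zero hn
  have h3 := cast_mul_descFactorial_pred k n
  field_simp
  linarith [h3]

lemma selection_term (N k n : ℕ) (hN : 1 ≤ N) (hk : k ≤ N) (hn : n ≤ N) (c : ℝ) (m : ℕ) :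
    c * (1 - ((k : ℝ) / N) ^ m) * ((k : ℝ) * (Hdual N (k - 1) n - Hdual N k n))
      = c * ((n : ℝ) / (N : ℝ) ^ m) * ∑ j ∈ Finset.Icc 1 m,
          (Nat.descFactorial (N - n) j : ℝ) * (Cnmj n m j : ℝ)
            * (Hdual N k (n + j) - Hdual N k n) := by
  have hD := descFactorial_N_ne_zero hn
  have hNpos : (0 : ℝ) < (N : ℝ) := by exact_mod_cast hN
  rw [k_mul_Hdiff N k n hn]
  have hsum : ∑ j ∈ Finset.Icc 1 m,
      (Nat.descFactorial (N - n) j : ℝ) * (Cnmj n m j : ℝ)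
        * (Hdual N k (n + j) - Hdual N k n)
      = (Nat.descFactorial k n : ℝ) / (Nat.descFactorial N n : ℝ)
        * ((∑ j ∈ Finset.Icc 1 m, (Cnmj n m j : ℝ) * (Nat.descFactorial (k - n) j : ℝ))
          - (∑ j ∈ Finset.Icc 1 m, (Cnmj n m j : ℝ) * (Nat.descFactorial (N - n) j : ℝ))) := by
    rw [mul_sub, Finset.mul_sum, Finset.mul_sum, ← Finset.sum_sub_distrib]
    apply Finset.sum_congr rfl
    intro j _
    have h1 : (Nat.descFactorial (N - n) j : ℝ) * (Hdual N k (n + j))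
        = (Nat.descFactorial k (n + j) : ℝ) / (Nat.descFactorial N n : ℝ) :=
      coef_Hdual N k n j hn hk
    have h2 : Nat.descFactorial k (n + j)
        = Nat.descFactorial k n * Nat.descFactorial (k - n) j := descFactorial_add' k n j
    rw [mul_comm (Nat.descFactorial (N - n) j : ℝ) (Cnmj n m j : ℝ), mul_assoc, mul_sub,
      h1, h2]
    unfold Hdual
    push_cast
    field_simp
  rw [hsum]
  rcases Nat.lt_or_ge k n with hkn | hkn
  · have hk0 : Nat.descFactorial k n = 0 := Nat.descFactorial_eq_zero_iff_lt.2 hkn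
    rw [hk0]
    push_cast
    ring
  · have e1 : ((n:ℕ) : ℝ) ^ m + ∑ j ∈ Finset.Icc 1 m, (Cnmj n m j : ℝ) * (Nat.descFactorial (k - n) j : ℝ)
        = (k : ℝ) ^ m := by
      have := sum_Cnmj n m (k - n)
      have hx : k - n + n = k := Nat.sub_add_cancel hkn
      rw [hx] at this
      exact_mod_cast this
    have e2 : ((n:ℕ) : ℝ) ^ m + ∑ j ∈ Finset.Icc 1 m, (Cnmj n m j : ℝ) * (Nat.descFactorial (N - n) j : ℝ)
        = (N : ℝ) ^ m := by
      have := sum_Cnmj n m (N - n)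
      have hx : N - n + n = N := Nat.sub_add_cancel hn
      rw [hx] at this
      exact_mod_cast this
    have hNm : (N : ℝ) ^ m ≠ 0 := pow_ne_zero m (ne_of_gt hNpos)
    have e1' : ∑ j ∈ Finset.Icc 1 m, (Cnmj n m j : ℝ) * (Nat.descFactorial (k - n) j : ℝ)
        = (k : ℝ) ^ m - (n : ℝ) ^ m := by linarith [e1]
    have e2' : ∑ j ∈ Finset.Icc 1 m, (Cnmj n m j : ℝ) * (Nat.descFactorial (N - n) j : ℝ)
        = (N : ℝ) ^ m - (n : ℝ) ^ m := by linarith [e2]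
    rw [e1', e2']
    field_simp
    have hinv : (N : ℝ) ^ m * (N : ℝ)⁻¹ ^ m = 1 := by
      rw [← mul_pow, mul_inv_cancel₀ hNpos.ne', one_pow]
    linear_combination (c * (k : ℝ) ^ m * (n : ℝ) * (Nat.descFactorial k n : ℝ)) * hinv

lemma neutral_part (N k n : ℕ) (hN : 1 ≤ N) (hk : k ≤ N) (hn : n ≤ N) :
    (k : ℝ) * (((N : ℝ) - k) / N) * (Hdual N (k + 1) n - Hdual N k n)
      + (k : ℝ) * (((N : ℝ) - k) / N) * (Hdual N (k - 1) n - Hdual N k n)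
    = (n : ℝ) * (((n : ℝ) - 1) / N) * (Hdual N k (n - 1) - Hdual N k n) := by
  rcases n with _ | n'
  · simp [Hdual]
  · have hn' : n' ≤ N := by omega
    have hDN := descFactorial_N_ne_zero hn
    have hDN' := descFactorial_N_ne_zero hn'
    have hN0 : ((N : ℕ) : ℝ) ≠ 0 := by positivity
    unfold Hdual
    simp only [Nat.succ_sub_one]
    have hPA : (Nat.descFactorial (k + 1) (n' + 1) : ℝ)
        = ((k : ℝ) + 1) * (Nat.descFactorial k n' : ℝ) := by
      rw [Nat.succ_descFactorial_succ]; push_cast; ring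
    have hBA : (Nat.descFactorial k (n' + 1) : ℝ)
        = ((k : ℝ) - n') * (Nat.descFactorial k n' : ℝ) := cast_descFactorial_succ k n'
    have hDD : (Nat.descFactorial N (n' + 1) : ℝ)
        = ((N : ℝ) - n') * (Nat.descFactorial N n' : ℝ) := cast_descFactorial_succ N n'
    have hQ2 : (k : ℝ) * (Nat.descFactorial (k - 1) (n' + 1) : ℝ)
        = ((k : ℝ) - (n' + 1)) * (((k : ℝ) - n') * (Nat.descFactorial k n' : ℝ)) := by
      rw [cast_mul_descFactorial_pred k (n' + 1), hBA]; push_cast; ring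
    rcases Nat.eq_zero_or_pos k with hk0 | hk0
    · subst hk0
      rcases Nat.eq_zero_or_pos n' with hn0 | hn0
      · subst hn0; norm_num
      · have hA0 : Nat.descFactorial 0 n' = 0 := Nat.descFactorial_eq_zero_iff_lt.2 hn0
        have hB0 : Nat.descFactorial 0 (n' + 1) = 0 :=
          Nat.descFactorial_eq_zero_iff_lt.2 (by omega)
        rw [hA0, hB0]
        norm_num
    · have hkR : ((k : ℕ) : ℝ) ≠ 0 := by positivity
      have hQ3 : (Nat.descFactorial (k - 1) (n' + 1) : ℝ)
          = ((k : ℝ) - (n' + 1)) * (((k : ℝ) - n') * (Nat.descFactorial k n' : ℝ)) / k := by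
        rw [eq_div_iff hkR]; linarith [hQ2]
      rw [hPA, hBA, hDD, hQ3]
      have hNn' : ((N : ℝ) - n') ≠ 0 := by
        have : (n' : ℝ) < N := by exact_mod_cast Nat.lt_of_lt_of_le (Nat.lt_succ_self n') hn
        linarith
      push_cast
      field_simp
      ring

/-- Generator identity behind the factorial moment duality between the FTW Moran model
(no mutation) and the line-counting process of the killed ASG:
`𝒜_Y H(·,n)(k) = 𝒜_R H(k,·)(n)` for all `k, n ∈ {0,…,N}`. -/
theorem factorial_moment_duality_generator_identity (N : ℕ) (hN : 1 ≤ N)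
    (s : ℕ → ℝ) (hs : ∀ m, 0 ≤ s m)
    (hsum : Summable (fun m : ℕ => (m : ℝ) * s m))
    (k n : ℕ) (hk : k ≤ N) (hn : n ≤ N) :
    (k : ℝ) * (((N : ℝ) - k) / N) * (Hdual N (k + 1) n - Hdual N k n)
      + (k : ℝ) * (((N : ℝ) - k) / N
          + ∑' m : ℕ, s m * (1 - ((k : ℝ) / N) ^ m))
          * (Hdual N (k - 1) n - Hdual N k n)
    = (n : ℝ) * (((n : ℝ) - 1) / N) * (Hdual N k (n - 1) - Hdual N k n)
      + ∑' m : ℕ, s m * ((n : ℝ) / (N : ℝ) ^ m)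
          * ∑ j ∈ Finset.Icc 1 m,
              (Nat.descFactorial (N - n) j : ℝ) * (Cnmj n m j : ℝ)
                * (Hdual N k (n + j) - Hdual N k n) := by
  have hT : (∑' m : ℕ, s m * (1 - ((k : ℝ) / N) ^ m)
        * ((k : ℝ) * (Hdual N (k - 1) n - Hdual N k n)))
      = (∑' m : ℕ, s m * (1 - ((k : ℝ) / N) ^ m))
        * ((k : ℝ) * (Hdual N (k - 1) n - Hdual N k n)) :=
    tsum_mul_right
  have hC : (∑' m : ℕ, s m * (1 - ((k : ℝ) / N) ^ m)
        * ((k : ℝ) * (Hdual N (k - 1) n - Hdual N k n)))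
      = ∑' m : ℕ, s m * ((n : ℝ) / (N : ℝ) ^ m)
          * ∑ j ∈ Finset.Icc 1 m,
              (Nat.descFactorial (N - n) j : ℝ) * (Cnmj n m j : ℝ)
                * (Hdual N k (n + j) - Hdual N k n) :=
    tsum_congr fun m => selection_term N k n hN hk hn (s m) m
  have hneutral := neutral_part N k n hN hk hn
  linear_combination hneutral - hT + hC
end

section
/- Fix N ≥ 1, u > 0, ν_0, ν_1 ≥ 0. For the mutation generator parts 𝒜^{ν_1}_{Ỹ} f(k) = (N-k)(k/(k+1)) u ν_1 [f(k+1)-f(k)] + ((N-k)/(k+1)) u ν_1 [f(0)-f(k)] acting on f:{0,…,N}→ℝ, and 𝒜^{ν_1}_{L} g(n) = u ν_1 (n-1)[g(n-1)-g(n)] acting on g:{1,…,N}→ℝ, and for the duality function H(k,n) = k^{\underline{n}}/N^{\underline{n}}, one has 𝒜^{ν_1}_{Ỹ} H(·,n)(k) = 𝒜^{ν_1}_{L} H(k,·)(n) for all k ∈ {0,…,N} and n ∈ {1,…,N}. -/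
/-- Deleterious-mutation part of the generator identity in the factorial moment duality
between `Ỹ` and the line-counting process `L` of the pruned lookdown ASG:
`𝒜^{ν₁}_{Ỹ} H(·,n)(k) = 𝒜^{ν₁}_{L} H(k,·)(n)`. -/
theorem deleterious_mutation_generator_identity (N : ℕ) (hN : 1 ≤ N)
    (u ν₀ ν₁ : ℝ) (hu : 0 < u) (hν₀ : 0 ≤ ν₀) (hν₁ : 0 ≤ ν₁)
    (k n : ℕ) (hk : k ≤ N) (hn1 : 1 ≤ n) (hnN : n ≤ N) :
    ((N : ℝ) - k) * ((k : ℝ) / ((k : ℝ) + 1)) * u * ν₁ * (Hdual N (k + 1) n - Hdual N k n)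
      + (((N : ℝ) - k) / ((k : ℝ) + 1)) * u * ν₁ * (Hdual N 0 n - Hdual N k n)
    = u * ν₁ * ((n : ℝ) - 1) * (Hdual N k (n - 1) - Hdual N k n) := by
  obtain ⟨m, rfl⟩ : ∃ m, n = m + 1 := ⟨n - 1, (Nat.succ_pred_eq_of_pos hn1).symm⟩
  have hmN : m ≤ N := by omega
  have hDN : (0 : ℝ) < (Nat.descFactorial N (m + 1) : ℝ) := by
    exact_mod_cast Nat.pos_of_ne_zero fun h => by
      have := Nat.descFactorial_eq_zero_iff_lt.mp h; omega
  have hDNm : (0 : ℝ) < (Nat.descFactorial N m : ℝ) := by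
    exact_mod_cast Nat.pos_of_ne_zero fun h => by
      have := Nat.descFactorial_eq_zero_iff_lt.mp h; omega
  have hk1 : ((k : ℝ) + 1) ≠ 0 := by positivity
  have hDNsucc : (Nat.descFactorial N (m + 1) : ℝ)
      = ((N : ℝ) - m) * Nat.descFactorial N m := by
    rw [Nat.descFactorial_succ]; push_cast [Nat.cast_sub hmN]; ring
  have hksucc : (Nat.descFactorial (k + 1) (m + 1) : ℝ)
      = ((k : ℝ) + 1) * Nat.descFactorial k m := by
    rw [Nat.succ_descFactorial_succ]; push_cast; ring
  simp only [Hdual, Nat.add_sub_cancel, Nat.zero_descFactorial_succ, Nat.cast_zero,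
    zero_div]
  rcases lt_or_ge k m with hkm | hkm
  · have h1 : Nat.descFactorial k m = 0 := Nat.descFactorial_of_lt hkm
    have h2 : Nat.descFactorial k (m + 1) = 0 := Nat.descFactorial_of_lt (by omega)
    rw [hksucc, h1, h2]
    simp
  · have hkmsucc : (Nat.descFactorial k (m + 1) : ℝ)
        = ((k : ℝ) - m) * Nat.descFactorial k m := by
      rw [Nat.descFactorial_succ]; push_cast [Nat.cast_sub hkm]; ring
    rw [hksucc, hkmsucc, hDNsucc]
    have hNm : ((N : ℝ) - m) ≠ 0 := by
      have h : (m : ℝ) < N := by exact_mod_cast (by omega : m < N)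
      exact ne_of_gt (by linarith)
    field_simp
    push_cast
    ring
end

section
/- Fix N ≥ 1, u > 0, ν_0 ≥ 0. For 𝒜^{ν_0}_{Ỹ} f(k) = k((N-k)/(N-k+1)) u ν_0 [f(k-1)-f(k)] + (k/(N-k+1)) u ν_0 [f(N)-f(k)] acting on f:{0,…,N}→ℝ, and 𝒜^{ν_0}_{L} g(n) = u ν_0 ∑_{j=1}^{n-1}[g(j)-g(n)] acting on g:{1,…,N}→ℝ, and for the duality function H(k,n) = k^{\underline{n}}/N^{\underline{n}}, one has 𝒜^{ν_0}_{Ỹ} H(·,n)(k) = 𝒜^{ν_0}_{L} H(k,·)(n) for all k ∈ {0,…,N} and n ∈ {1,…,N}. -/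
lemma descFact_cast (k n : ℕ) :
    ((Nat.descFactorial k (n + 1) : ℕ) : ℝ) = ((k : ℝ) - n) * Nat.descFactorial k n := by
  rcases le_or_gt n k with h | h
  · rw [Nat.descFactorial_succ]
    push_cast [h]
    ring
  · rw [Nat.descFactorial_eq_zero_iff_lt.2 h,
      Nat.descFactorial_eq_zero_iff_lt.2 (Nat.lt_succ_of_lt h)]
    simp

lemma sumH (N k : ℕ) (hk : k ≤ N) :
    ∀ n, 1 ≤ n → n ≤ N →
      ∑ j ∈ Finset.Icc 1 (n - 1), Hdual N k j
        = (k : ℝ) / ((N : ℝ) - k + 1)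
          - (((N : ℝ) - n + 1) / ((N : ℝ) - k + 1)) * Hdual N k n := by
  have hc : ((N : ℝ) - k + 1) ≠ 0 := by
    have : (k : ℝ) ≤ N := by exact_mod_cast hk
    nlinarith
  intro n
  induction n with
  | zero => intro h; omega
  | succ m ih =>
    intro _ hmN
    rcases Nat.eq_zero_or_pos m with hm | hm
    · subst hm
      have hN0 : (N : ℝ) ≠ 0 := by
        have : 1 ≤ N := hmN
        positivity
      simp only [Nat.sub_self, Finset.Icc_self, Nat.zero_add]
      have : Finset.Icc 1 0 = (∅ : Finset ℕ) := by decide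
      rw [this, Finset.sum_empty, Hdual, Nat.descFactorial_one, Nat.descFactorial_one]
      field_simp
      ring
    · have hmN' : m ≤ N := le_of_lt hmN
      have hmltN : m < N := hmN
      have step : Finset.Icc 1 (m + 1 - 1) = Finset.Icc 1 (m - 1) ∪ {m} := by
        rw [Nat.add_sub_cancel]
        ext x
        simp [Finset.mem_Icc, Finset.mem_union]
        omega
      have hdisj : Disjoint (Finset.Icc 1 (m - 1)) ({m} : Finset ℕ) := by
        simp [Finset.disjoint_singleton_right, Finset.mem_Icc]
        omega
      rw [step, Finset.sum_union hdisj, Finset.sum_singleton, ih hm hmN']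
      have hDm : (Nat.descFactorial N m : ℝ) ≠ 0 := by
        have : Nat.descFactorial N m ≠ 0 := by
          rw [Ne, Nat.descFactorial_eq_zero_iff_lt]; omega
        exact_mod_cast this
      have hNm : (N : ℝ) - m ≠ 0 := by
        have : (m : ℝ) < N := by exact_mod_cast hmltN
        linarith
      rw [Hdual, Hdual, descFact_cast, descFact_cast]
      push_cast
      field_simp
      ring

/-- Beneficial-mutation part of the generator identity in the factorial moment duality
between `Ỹ` and the line-counting process `L` of the pruned lookdown ASG:
`𝒜^{ν₀}_{Ỹ} H(·,n)(k) = 𝒜^{ν₀}_{L} H(k,·)(n)`. -/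
theorem beneficial_mutation_generator_identity (N : ℕ) (hN : 1 ≤ N)
    (u ν₀ : ℝ) (hu : 0 < u) (hν₀ : 0 ≤ ν₀)
    (k n : ℕ) (hk : k ≤ N) (hn1 : 1 ≤ n) (hnN : n ≤ N) :
    (k : ℝ) * (((N : ℝ) - k) / ((N : ℝ) - k + 1)) * u * ν₀
        * (Hdual N (k - 1) n - Hdual N k n)
      + ((k : ℝ) / ((N : ℝ) - k + 1)) * u * ν₀ * (Hdual N N n - Hdual N k n)
    = u * ν₀ * ∑ j ∈ Finset.Icc 1 (n - 1), (Hdual N k j - Hdual N k n) := by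
  have hc : ((N : ℝ) - k + 1) ≠ 0 := by
    have : (k : ℝ) ≤ N := by exact_mod_cast hk
    nlinarith
  have hD : (Nat.descFactorial N n : ℝ) ≠ 0 := by
    have : Nat.descFactorial N n ≠ 0 := by
      rw [Ne, Nat.descFactorial_eq_zero_iff_lt]; omega
    exact_mod_cast this
  -- H(N, n) = 1
  have hHN : Hdual N N n = 1 := by
    rw [Hdual, div_self hD]
  -- k * (H(k-1,n) - H(k,n)) = -n * H(k,n)
  have hA : (k : ℝ) * (Hdual N (k - 1) n - Hdual N k n) = -(n : ℝ) * Hdual N k n := by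
    rcases Nat.eq_zero_or_pos k with h0 | h0
    · subst h0
      have : Nat.descFactorial 0 n = 0 := by
        rw [Nat.descFactorial_eq_zero_iff_lt]; omega
      simp [Hdual, this]
    · obtain ⟨m, rfl⟩ := Nat.exists_eq_add_of_le h0
      have key : ((m + 1 : ℕ) : ℝ) * (Nat.descFactorial m n : ℝ)
          = (((m : ℝ) + 1) - n) * Nat.descFactorial (m + 1) n := by
        have h1 : Nat.descFactorial (m + 1) (n + 1) = (m + 1) * Nat.descFactorial m n :=
          Nat.succ_descFactorial_succ m n
        have h2 := descFact_cast (m + 1) n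
        rw [h1] at h2
        push_cast at h2 ⊢
        linarith [h2]
      have hms : 1 + m - 1 = m := by omega
      rw [hms]
      simp only [Hdual]
      have : ((1 + m : ℕ) : ℝ) = (m : ℝ) + 1 := by push_cast; ring
      rw [this]
      have hm1 : (1 + m : ℕ) = m + 1 := by omega
      rw [hm1]
      field_simp
      push_cast at key ⊢
      linear_combination key
  -- rewrite the sum
  rw [Finset.sum_sub_distrib, Finset.sum_const, Nat.card_Icc]
  have hcard : ((n - 1 + 1 - 1 : ℕ) : ℝ) = (n : ℝ) - 1 := by
    have : n - 1 + 1 - 1 = n - 1 := by omega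
    rw [this]
    push_cast [hn1]
    ring
  rw [nsmul_eq_mul, hcard, sumH N k hk n hn1 hnN, hHN]
  have hA' : (k : ℝ) * (((N : ℝ) - k) / ((N : ℝ) - k + 1)) * u * ν₀
      * (Hdual N (k - 1) n - Hdual N k n)
      = (((N : ℝ) - k) / ((N : ℝ) - k + 1)) * u * ν₀ * (-(n : ℝ) * Hdual N k n) := by
    rw [← hA]; ring
  rw [hA']
  field_simp
  ring
end

section
/- For any random variable R taking values in {1,…,N} and any k ∈ {0,…,N}, one has 1 - E[ k^{\underline{R}} / N^{\underline{R}} ] = ((N-k)/N) · ∑_{n=0}^{N-1} P(R > n) · ( k^{\underline{n}} / (N-1)^{\underline{n}} ). -/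
open MeasureTheory

private lemma desc_cast_real (k n : ℕ) :
    (Nat.descFactorial k (n+1) : ℝ) = ((k:ℝ) - n) * Nat.descFactorial k n := by
  rcases lt_or_ge n k with h | h
  · rw [Nat.descFactorial_succ]
    push_cast [Nat.cast_sub h.le]
    ring
  · rcases eq_or_lt_of_le h with h' | h'
    · subst h'
      rw [Nat.descFactorial_succ]
      simp
    · rw [Nat.descFactorial_of_lt h', Nat.descFactorial_of_lt (by omega)]
      simp

/-- Summation-by-parts representation of the ancestral type distribution: for a random
variable `R` with values in `{1,…,N}`,
`1 - E[k^{\underline R}/N^{\underline R}]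
  = ((N-k)/N) ∑_{n=0}^{N-1} P(R > n) k^{\underline n}/(N-1)^{\underline n}`. -/
theorem ancestral_type_tail_representation
    {Ω : Type*} [MeasurableSpace Ω] (μ : Measure Ω) [IsProbabilityMeasure μ]
    (N : ℕ) (hN : 1 ≤ N) (R : Ω → ℕ) (hR : Measurable R)
    (hrange : ∀ ω, R ω ∈ Finset.Icc 1 N)
    (k : ℕ) (hk : k ≤ N) :
    1 - ∫ ω, ((Nat.descFactorial k (R ω) : ℝ) / (Nat.descFactorial N (R ω))) ∂μ
      = (((N : ℝ) - k) / N)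
          * ∑ n ∈ Finset.range N,
              (μ {ω | n < R ω}).toReal
                * ((Nat.descFactorial k n : ℝ) / (Nat.descFactorial (N - 1) n)) := by
  classical
  set g : ℕ → ℝ := fun r => (Nat.descFactorial k r : ℝ) / (Nat.descFactorial N r) with hg
  set p : ℕ → ℝ := fun r => (μ {ω | R ω = r}).toReal with hp
  have hmeas : ∀ r : ℕ, MeasurableSet {ω | R ω = r} :=
    fun r => hR (measurableSet_singleton r)
  -- integral as finite sum
  have hpt : ∀ ω, g (R ω) = ∑ r ∈ Finset.Icc 1 N,
      Set.indicator {ω' | R ω' = r} (fun _ => g r) ω := by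
    intro ω
    rw [Finset.sum_eq_single_of_mem (R ω) (hrange ω)]
    · simp [Set.indicator_apply]
    · intro b _ hb
      simp only [Set.indicator_apply, Set.mem_setOf_eq]
      exact if_neg (fun h => hb h.symm)
  have hint : ∫ ω, g (R ω) ∂μ = ∑ r ∈ Finset.Icc 1 N, p r * g r := by
    simp_rw [hpt]
    rw [integral_finset_sum]
    · refine Finset.sum_congr rfl fun r _ => ?_
      rw [integral_indicator_const _ (hmeas r)]
      simp [hp, mul_comm, measureReal_def]
    · intro r _
      exact (integrable_indicator_iff (hmeas r)).mpr
        (integrableOn_const (measure_lt_top μ _).ne)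
  -- total mass
  have hone : ∑ r ∈ Finset.Icc 1 N, p r = 1 := by
    have hdisj : ((Finset.Icc 1 N : Finset ℕ) : Set ℕ).PairwiseDisjoint
        (fun r => {ω | R ω = r}) := by
      intro a _ b _ hab
      simp only [Function.onFun, Set.disjoint_left, Set.mem_setOf_eq]
      intro ω h1 h2; exact hab (h1 ▸ h2 ▸ rfl)
    have hunion : (⋃ r ∈ Finset.Icc 1 N, {ω | R ω = r}) = Set.univ := by
      ext ω
      simp only [Set.mem_iUnion, Set.mem_setOf_eq, Set.mem_univ, iff_true]
      exact ⟨R ω, hrange ω, rfl⟩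
    have := measure_biUnion_finset (μ := μ) hdisj (fun r _ => hmeas r)
    rw [hunion, measure_univ] at this
    have := congrArg ENNReal.toReal this
    rw [ENNReal.toReal_sum (fun r _ => measure_ne_top μ _)] at this
    simpa [hp] using this.symm
  -- tail probabilities
  have htail : ∀ n : ℕ, (μ {ω | n < R ω}).toReal
      = ∑ r ∈ Finset.Icc 1 N, if n < r then p r else 0 := by
    intro n
    have hdisj : (((Finset.Icc 1 N).filter (n < ·) : Finset ℕ) : Set ℕ).PairwiseDisjoint
        (fun r => {ω | R ω = r}) := by
      intro a _ b _ hab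
      simp only [Function.onFun, Set.disjoint_left, Set.mem_setOf_eq]
      intro ω h1 h2; exact hab (h1 ▸ h2 ▸ rfl)
    have hunion : (⋃ r ∈ (Finset.Icc 1 N).filter (n < ·), {ω | R ω = r})
        = {ω | n < R ω} := by
      ext ω
      simp only [Set.mem_iUnion, Set.mem_setOf_eq, Finset.mem_filter]
      constructor
      · rintro ⟨r, ⟨_, hr⟩, hrw⟩; exact hrw ▸ hr
      · intro h; exact ⟨R ω, ⟨hrange ω, h⟩, rfl⟩
    have := measure_biUnion_finset (μ := μ) hdisj (fun r _ => hmeas r)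
    rw [hunion] at this
    have := congrArg ENNReal.toReal this
    rw [ENNReal.toReal_sum (fun r _ => measure_ne_top μ _)] at this
    rw [this, Finset.sum_filter]
  -- key difference identity
  have key : ∀ n ∈ Finset.range N, g n - g (n+1)
      = (((N:ℝ) - k)/N) * ((Nat.descFactorial k n : ℝ) / (Nat.descFactorial (N-1) n)) := by
    intro n hn
    rw [Finset.mem_range] at hn
    have hd : (0:ℝ) < Nat.descFactorial N n := by
      have : N.descFactorial n ≠ 0 := fun h => by
        have := Nat.descFactorial_eq_zero_iff_lt.mp h; omega
      exact_mod_cast Nat.pos_of_ne_zero this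
    have he : (0:ℝ) < Nat.descFactorial (N-1) n := by
      have : (N-1).descFactorial n ≠ 0 := fun h => by
        have := Nat.descFactorial_eq_zero_iff_lt.mp h; omega
      exact_mod_cast Nat.pos_of_ne_zero this
    have hNn : (0:ℝ) < (N:ℝ) - n := by
      have : n < N := hn; exact sub_pos.mpr (by exact_mod_cast this)
    have hN0 : (0:ℝ) < (N:ℝ) := by exact_mod_cast hN
    have h2 : (Nat.descFactorial k (n+1) : ℝ)
        = ((k:ℝ) - n) * Nat.descFactorial k n := desc_cast_real k n
    have h1 : (Nat.descFactorial N (n+1) : ℝ)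
        = ((N:ℝ) - n) * Nat.descFactorial N n := desc_cast_real N n
    have h3 : (Nat.descFactorial N (n+1) : ℝ)
        = (N:ℝ) * Nat.descFactorial (N-1) n := by
      have h4 : ((N-1)+1 : ℕ) = N := by omega
      have := Nat.succ_descFactorial_succ (N-1) n
      rw [h4] at this
      exact_mod_cast this
    have hrel : ((N:ℝ) - n) * Nat.descFactorial N n
        = (N:ℝ) * Nat.descFactorial (N-1) n := by rw [← h1, h3]
    simp only [hg]
    rw [h2, h1]
    field_simp
    linear_combination (-(((N:ℝ)-(k:ℝ)) * (Nat.descFactorial k n : ℝ))) * hrel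
  -- main computation
  have hD : ∀ r ∈ Finset.Icc 1 N, 1 - g r = ∑ n ∈ Finset.range N,
      if n < r then (g n - g (n+1)) else 0 := by
    intro r hr
    rw [Finset.mem_Icc] at hr
    have htel : ∑ n ∈ Finset.range r, (g n - g (n+1)) = g 0 - g r :=
      Finset.sum_range_sub' g r
    have hfil : (Finset.range N).filter (· < r) = Finset.range r := by
      ext m; simp only [Finset.mem_filter, Finset.mem_range]; omega
    rw [← Finset.sum_filter, hfil, htel]
    simp [hg]
  calc 1 - ∫ ω, g (R ω) ∂μ
      = ∑ r ∈ Finset.Icc 1 N, p r * (1 - g r) := by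
        rw [hint]
        simp only [mul_sub, mul_one, Finset.sum_sub_distrib, hone]
    _ = ∑ r ∈ Finset.Icc 1 N, ∑ n ∈ Finset.range N,
          (if n < r then p r else 0) * (g n - g (n+1)) := by
        refine Finset.sum_congr rfl fun r hr => ?_
        rw [hD r hr, Finset.mul_sum]
        refine Finset.sum_congr rfl fun n _ => ?_
        split_ifs <;> ring
    _ = ∑ n ∈ Finset.range N,
          (μ {ω | n < R ω}).toReal * (g n - g (n+1)) := by
        rw [Finset.sum_comm]
        refine Finset.sum_congr rfl fun n _ => ?_
        rw [htail n, Finset.sum_mul]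
    _ = (((N : ℝ) - k) / N)
          * ∑ n ∈ Finset.range N,
              (μ {ω | n < R ω}).toReal
                * ((Nat.descFactorial k n : ℝ) / (Nat.descFactorial (N - 1) n)) := by
        rw [Finset.mul_sum]
        refine Finset.sum_congr rfl fun n hn => ?_
        rw [key n hn]
        ring
end

section
/- Fix m ≥ 1, σ > 0, 0 < α < 1. For k ∈ {1,…,N-1} let q_k := (1 + (σ/N^α) · (1-(k/N)^m)/(1-(k/N)))^{-1}. Then the fixation probability of a single fit mutant, 1 - h_∞(N-1) = 1/∑_{ℓ=1}^{N} ∏_{j=ℓ}^{N-1} q_j, satisfies 1 - h_∞(N-1) = (mσ/N^α)(1 + o(1)) as N → ∞. -/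
open Filter Finset

lemma geom_div (x : ℝ) (hx : x ≠ 1) (m : ℕ) :
    (1 - x ^ m) / (1 - x) = ∑ i ∈ range m, x ^ i := by
  rw [div_eq_iff (sub_ne_zero.2 (Ne.symm hx))]
  linear_combination geom_sum_mul x m

lemma geom_sum_one_sub (r : ℝ) (N : ℕ) :
    (1 - r) * ∑ i ∈ range N, r ^ i = 1 - r ^ N := by
  linear_combination - geom_sum_mul r N

lemma sum_Icc_reindex (f : ℕ → ℝ) (N : ℕ) :
    ∑ ℓ ∈ Icc 1 N, f (N - ℓ) = ∑ i ∈ range N, f i := by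
  apply Finset.sum_nbij' (fun ℓ => N - ℓ) (fun i => N - i) <;>
    (intros ; simp_all only [Finset.mem_Icc, Finset.mem_range]) <;> omega

section Haldane
variable (m : ℕ) (σ α : ℝ)

lemma frac_mem (N j : ℕ) (hj : j ≤ N) : 0 ≤ (j:ℝ)/N ∧ (j:ℝ)/N ≤ 1 := by
  constructor
  · positivity
  · apply div_le_one_of_le₀ (by exact_mod_cast hj) (by positivity)

lemma G_le (N j : ℕ) (hj : j ≤ N) : ∑ i ∈ range m, ((j:ℝ)/N)^i ≤ m := by
  obtain ⟨h0, h1⟩ := frac_mem N j hj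
  calc ∑ i ∈ range m, ((j:ℝ)/N)^i ≤ ∑ i ∈ range m, 1 :=
        Finset.sum_le_sum (fun i _ => pow_le_one₀ h0 h1)
    _ = m := by simp

lemma G_nonneg (N j : ℕ) : 0 ≤ ∑ i ∈ range m, ((j:ℝ)/N)^i := by positivity

lemma G_lb (hm : 1 ≤ m) (N j : ℕ) (hj : j ≤ N) :
    (m:ℝ) * ((j:ℝ)/N)^(m-1) ≤ ∑ i ∈ range m, ((j:ℝ)/N)^i := by
  obtain ⟨h0, h1⟩ := frac_mem N j hj
  calc (m:ℝ) * ((j:ℝ)/N)^(m-1) = ∑ _i ∈ range m, ((j:ℝ)/N)^(m-1) := by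
        simp [Finset.sum_const, nsmul_eq_mul]
    _ ≤ ∑ i ∈ range m, ((j:ℝ)/N)^i :=
        Finset.sum_le_sum (fun i hi => pow_le_pow_of_le_one h0 h1
          (by simp only [Finset.mem_range] at hi; omega))

end Haldane

lemma S_lower (m : ℕ) (hm : 1 ≤ m) (σ α : ℝ) (hσ : 0 < σ) (N : ℕ) (hN : 1 ≤ N) :
    1 - ((1 + σ/(N:ℝ)^α * m)⁻¹)^N ≤
      (∑ ℓ ∈ Finset.Icc 1 N, ∏ j ∈ Finset.Icc ℓ (N-1),
        (1 + (σ/(N:ℝ)^α) * ((1 - ((j:ℝ)/N)^m)/(1 - (j:ℝ)/N)))⁻¹) * ((m:ℝ) * (σ/(N:ℝ)^α)) := by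
  have hNR : (0:ℝ) < N := by exact_mod_cast hN
  set s : ℝ := σ/(N:ℝ)^α with hs
  have hs0 : 0 < s := div_pos hσ (Real.rpow_pos_of_pos hNR α)
  have hsm : 0 < 1 + s * m := by positivity
  set r : ℝ := (1 + s * m)⁻¹ with hr
  have hr0 : 0 ≤ r := by positivity
  have hprod : ∀ ℓ ∈ Finset.Icc 1 N, r^(N-ℓ) ≤ ∏ j ∈ Finset.Icc ℓ (N-1),
      (1 + s * ((1 - ((j:ℝ)/N)^m)/(1 - (j:ℝ)/N)))⁻¹ := by
    intro ℓ hℓ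
    have hcard : (Finset.Icc ℓ (N-1)).card = N - ℓ := by
      rw [Nat.card_Icc]; simp only [Finset.mem_Icc] at hℓ; omega
    rw [← hcard, ← Finset.prod_const]
    refine Finset.prod_le_prod (fun _ _ => hr0) ?_
    intro j hj
    have hjN : j < N := by
      simp only [Finset.mem_Icc] at hj hℓ; omega
    have hx1 : (j:ℝ)/N ≠ 1 := by
      apply ne_of_lt
      rw [div_lt_one hNR]
      exact_mod_cast hjN
    rw [geom_div _ hx1]
    have hG := G_le m N j hjN.le
    have hGn : (0:ℝ) ≤ ∑ i ∈ range m, ((j:ℝ)/N)^i := by positivity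
    exact inv_anti₀ (by positivity) (by nlinarith)
  have hsum : ∑ ℓ ∈ Finset.Icc 1 N, r^(N-ℓ) ≤
      ∑ ℓ ∈ Finset.Icc 1 N, ∏ j ∈ Finset.Icc ℓ (N-1),
        (1 + s * ((1 - ((j:ℝ)/N)^m)/(1 - (j:ℝ)/N)))⁻¹ := Finset.sum_le_sum hprod
  rw [sum_Icc_reindex (fun k => r^k) N] at hsum
  set A : ℝ := ∑ i ∈ range N, r^i with hA
  have hA0 : 0 ≤ A := Finset.sum_nonneg (fun i _ => by positivity)
  have h1 : (1 - r) * A = 1 - r^N := geom_sum_one_sub r N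
  have h2 : 1 - r ≤ s * m := by
    have hc : (1 + s*m) * r = 1 := mul_inv_cancel₀ (ne_of_gt hsm)
    nlinarith [hc, hr0, mul_nonneg hs0.le (Nat.cast_nonneg m : (0:ℝ) ≤ m)]
  calc 1 - r^N = (1-r) * A := h1.symm
    _ ≤ (s*m) * A := mul_le_mul_of_nonneg_right h2 hA0
    _ ≤ (s*m) * (∑ ℓ ∈ Finset.Icc 1 N, ∏ j ∈ Finset.Icc ℓ (N-1),
        (1 + s * ((1 - ((j:ℝ)/N)^m)/(1 - (j:ℝ)/N)))⁻¹) :=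
        mul_le_mul_of_nonneg_left hsum (by positivity)
    _ = _ := by ring

set_option maxHeartbeats 1000000 in
lemma S_upper (m : ℕ) (hm : 1 ≤ m) (σ α : ℝ) (hσ : 0 < σ) (δ : ℝ) (hδ0 : 0 < δ)
    (hδm : (m:ℝ)*δ < 1) (N : ℕ) (hN : 1 ≤ N) (hKN : (⌊δ*N⌋₊ : ℕ) ≤ N - 1)
    (h4 : 4 ≤ δ*N) :
    (∑ ℓ ∈ Finset.Icc 1 N, ∏ j ∈ Finset.Icc ℓ (N-1),
        (1 + (σ/(N:ℝ)^α) * ((1 - ((j:ℝ)/N)^m)/(1 - (j:ℝ)/N)))⁻¹) * ((m:ℝ) * (σ/(N:ℝ)^α))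
      ≤ ((m:ℝ)/((m:ℝ)*(1-(m:ℝ)*δ)))*(1+(σ/(N:ℝ)^α)*((m:ℝ)*(1-(m:ℝ)*δ)))
        + (16*m/(σ*((m:ℝ)*(1-(m:ℝ)*δ))^2*δ^2)) * ((N:ℝ)^α/N) := by
  have hNR : (0:ℝ) < N := by exact_mod_cast hN
  have hmR : (1:ℝ) ≤ m := by exact_mod_cast hm
  set s : ℝ := σ/(N:ℝ)^α with hs
  have hs0 : 0 < s := div_pos hσ (Real.rpow_pos_of_pos hNR α)
  set c : ℝ := (m:ℝ)*(1-(m:ℝ)*δ) with hc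
  have hc0 : 0 < c := by
    apply mul_pos (by linarith) (by linarith)
  have hsc : 0 < 1 + s*c := by positivity
  set r : ℝ := (1 + s*c)⁻¹ with hr
  have hr0 : 0 < r := by positivity
  have hr1 : r ≤ 1 := by
    rw [hr]
    apply inv_le_one_of_one_le₀
    nlinarith
  set K : ℕ := ⌊δ*N⌋₊ with hK
  have hKle : (K:ℝ) ≤ δ*N := Nat.floor_le (by positivity)
  have hKge : δ*N - 1 ≤ (K:ℝ) := by
    have := Nat.lt_floor_add_one (δ*N)
    linarith
  have hKN' : K ≤ N := by omega
  -- factor bound on good indices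
  have hfac : ∀ j : ℕ, N - K ≤ j → j ≤ N - 1 →
      (1 + s * ((1 - ((j:ℝ)/N)^m)/(1 - (j:ℝ)/N)))⁻¹ ≤ r := by
    intro j hj1 hj2
    have hjN : j < N := by omega
    have hx1 : (j:ℝ)/N ≠ 1 := ne_of_lt (by rw [div_lt_one hNR]; exact_mod_cast hjN)
    rw [geom_div _ hx1]
    have hGlb := G_lb m hm N j hjN.le
    -- (j/N) ≥ 1 - δ
    have hjNr : 1 - δ ≤ (j:ℝ)/N := by
      have hcast : ((N - K : ℕ):ℝ) = (N:ℝ) - K := by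
        rw [Nat.cast_sub hKN']
      have hjr : (N:ℝ) - K ≤ (j:ℝ) := by
        rw [← hcast]; exact_mod_cast hj1
      rw [le_div_iff₀ hNR]
      nlinarith
    have hδ1 : δ < 1 := by nlinarith
    -- Bernoulli: (1-δ)^(m-1) ≥ 1 - (m-1)δ ≥ 1 - mδ
    have hbern : 1 - (m:ℝ)*δ ≤ (1-δ)^(m-1) := by
      have h2 : (-2:ℝ) ≤ -δ := by linarith
      have := one_add_mul_le_pow h2 (m-1)
      have hcast : ((m-1 : ℕ):ℝ) = (m:ℝ) - 1 := by
        rw [Nat.cast_sub hm]; simp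
      rw [hcast, show (1:ℝ) + -δ = 1 - δ by ring] at this
      have hδ0' : 0 ≤ δ := hδ0.le
      nlinarith
    have hpow : (1-δ)^(m-1) ≤ ((j:ℝ)/N)^(m-1) :=
      pow_le_pow_left₀ (by linarith) hjNr (m-1)
    have hcG : c ≤ ∑ i ∈ range m, ((j:ℝ)/N)^i := by
      calc c = (m:ℝ)*(1-(m:ℝ)*δ) := hc
        _ ≤ (m:ℝ)*((1-δ)^(m-1)) :=
            mul_le_mul_of_nonneg_left hbern (by linarith)
        _ ≤ (m:ℝ)*(((j:ℝ)/N)^(m-1)) :=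
            mul_le_mul_of_nonneg_left hpow (by linarith)
        _ ≤ _ := hGlb
    rw [hr]
    refine inv_anti₀ hsc ?_
    have := mul_le_mul_of_nonneg_left hcG hs0.le
    linarith
  -- each factor is in (0,1]
  have hf01 : ∀ j : ℕ, j < N → 0 < (1 + s * ((1 - ((j:ℝ)/N)^m)/(1 - (j:ℝ)/N)))⁻¹ ∧
      (1 + s * ((1 - ((j:ℝ)/N)^m)/(1 - (j:ℝ)/N)))⁻¹ ≤ 1 := by
    intro j hj
    have hx1 : (j:ℝ)/N ≠ 1 := ne_of_lt (by rw [div_lt_one hNR]; exact_mod_cast hj)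
    rw [geom_div _ hx1]
    have hG0 := G_nonneg m N j
    have hsG : 0 ≤ s * ∑ i ∈ range m, ((j:ℝ)/N)^i := mul_nonneg hs0.le hG0
    exact ⟨inv_pos.2 (by linarith), inv_le_one_of_one_le₀ (by linarith)⟩
  -- per-ℓ bound
  have hell : ∀ ℓ ∈ Finset.Icc 1 N,
      (∏ j ∈ Finset.Icc ℓ (N-1), (1 + s * ((1 - ((j:ℝ)/N)^m)/(1 - (j:ℝ)/N)))⁻¹)
        ≤ r^(N-ℓ) + r^K := by
    intro ℓ hℓ
    simp only [Finset.mem_Icc] at hℓ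
    set M : ℕ := max ℓ (N - K) with hM
    have hsub : Finset.Icc M (N-1) ⊆ Finset.Icc ℓ (N-1) :=
      Finset.Icc_subset_Icc (le_max_left _ _) le_rfl
    have hA0 : 0 < ∏ j ∈ Finset.Icc M (N-1), (1 + s * ((1 - ((j:ℝ)/N)^m)/(1 - (j:ℝ)/N)))⁻¹ :=
      Finset.prod_pos (fun j hj => (hf01 j (by simp only [Finset.mem_Icc] at hj; omega)).1)
    have h1 : (∏ j ∈ Finset.Icc ℓ (N-1), (1 + s * ((1 - ((j:ℝ)/N)^m)/(1 - (j:ℝ)/N)))⁻¹)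
        ≤ ∏ j ∈ Finset.Icc M (N-1), (1 + s * ((1 - ((j:ℝ)/N)^m)/(1 - (j:ℝ)/N)))⁻¹ := by
      rw [← Finset.prod_sdiff hsub]
      have hB1 : (∏ j ∈ (Finset.Icc ℓ (N-1)) \ (Finset.Icc M (N-1)),
          (1 + s * ((1 - ((j:ℝ)/N)^m)/(1 - (j:ℝ)/N)))⁻¹) ≤ 1 :=
        Finset.prod_le_one
          (fun j hj => (hf01 j (by
            have := Finset.mem_sdiff.1 hj
            simp only [Finset.mem_Icc] at this
            omega)).1.le)
          (fun j hj => (hf01 j (by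
            have := Finset.mem_sdiff.1 hj
            simp only [Finset.mem_Icc] at this
            omega)).2)
      exact mul_le_of_le_one_left hA0.le hB1
    have h2 : (∏ j ∈ Finset.Icc M (N-1), (1 + s * ((1 - ((j:ℝ)/N)^m)/(1 - (j:ℝ)/N)))⁻¹)
        ≤ r^(N - M) := by
      have hcard : (Finset.Icc M (N-1)).card = N - M := by rw [Nat.card_Icc]; omega
      calc (∏ j ∈ Finset.Icc M (N-1), (1 + s * ((1 - ((j:ℝ)/N)^m)/(1 - (j:ℝ)/N)))⁻¹)
          ≤ ∏ _j ∈ Finset.Icc M (N-1), r := by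
            apply Finset.prod_le_prod
            · intro j hj
              exact (hf01 j (by simp only [Finset.mem_Icc] at hj; omega)).1.le
            · intro j hj
              simp only [Finset.mem_Icc] at hj
              exact hfac j (le_trans (le_max_right _ _) hj.1) hj.2
        _ = r^(N-M) := by rw [Finset.prod_const, hcard]
    have hrK0 : (0:ℝ) ≤ r^K := by positivity
    have hrNl0 : (0:ℝ) ≤ r^(N-ℓ) := by positivity
    have h3 : N - M = N - ℓ ∨ N - M = K := by omega
    rcases h3 with h3 | h3 <;> rw [h3] at h2 <;> linarith [le_trans h1 h2]
  -- sum bound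
  have hS : (∑ ℓ ∈ Finset.Icc 1 N, ∏ j ∈ Finset.Icc ℓ (N-1),
      (1 + s * ((1 - ((j:ℝ)/N)^m)/(1 - (j:ℝ)/N)))⁻¹)
      ≤ (∑ i ∈ range N, r^i) + (N:ℝ) * r^K := by
    calc (∑ ℓ ∈ Finset.Icc 1 N, ∏ j ∈ Finset.Icc ℓ (N-1),
        (1 + s * ((1 - ((j:ℝ)/N)^m)/(1 - (j:ℝ)/N)))⁻¹)
        ≤ ∑ ℓ ∈ Finset.Icc 1 N, (r^(N-ℓ) + r^K) := Finset.sum_le_sum hell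
      _ = (∑ ℓ ∈ Finset.Icc 1 N, r^(N-ℓ)) + ∑ _ℓ ∈ Finset.Icc 1 N, r^K :=
          Finset.sum_add_distrib
      _ = (∑ i ∈ range N, r^i) + (N:ℝ) * r^K := by
          rw [sum_Icc_reindex (fun k => r^k) N, Finset.sum_const, Nat.card_Icc]
          simp only [Nat.add_sub_cancel, nsmul_eq_mul]
  -- geometric sum bound
  have hA' : (∑ i ∈ range N, r^i) ≤ (1+s*c)/(s*c) := by
    have h1r : 1 - r = s*c/(1+s*c) := by rw [hr]; field_simp; ring
    have h1r0 : 0 < 1 - r := by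
      rw [h1r]; positivity
    have h6 : (∑ i ∈ range N, r^i) = (1 - r^N)/(1-r) := by
      rw [eq_div_iff (ne_of_gt h1r0)]
      linear_combination geom_sum_one_sub r N
    have hrN : (0:ℝ) ≤ r^N := by positivity
    rw [h6]
    calc (1-r^N)/(1-r) ≤ 1/(1-r) := by
          gcongr
          linarith
      _ = (1+s*c)/(s*c) := by rw [h1r, one_div_div]
  -- tail bound
  set p : ℕ := K/2 with hp
  have hp4 : δ*N ≤ 4*(p:ℝ) := by
    have h2p : K ≤ 2*p+1 := by omega
    have h2pr : (K:ℝ) ≤ 2*(p:ℝ)+1 := by exact_mod_cast h2p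
    linarith
  have hscpos : 0 < s*c := mul_pos hs0 hc0
  have hpow2 : (δ*(N:ℝ)*(s*c)/4)^2 ≤ ((p:ℝ)*(s*c))^2 := by
    apply pow_le_pow_left₀ (by positivity)
    have := mul_le_mul_of_nonneg_right hp4 hscpos.le
    linarith
  have hKpow : ((p:ℝ)*(s*c))^2 ≤ (1+s*c)^K := by
    have h2p' : 2*p ≤ K := by omega
    have e1 : (1+s*c)^(2*p) ≤ (1+s*c)^K :=
      pow_le_pow_right₀ (by linarith) h2p'
    have e2 : 1 + (p:ℝ)*(s*c) ≤ (1+s*c)^p :=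
      one_add_mul_le_pow (by linarith) p
    have e3 : ((p:ℝ)*(s*c))^2 ≤ ((1+s*c)^p)^2 :=
      pow_le_pow_left₀ (by positivity) (by linarith) 2
    calc ((p:ℝ)*(s*c))^2 ≤ ((1+s*c)^p)^2 := e3
      _ = (1+s*c)^(2*p) := by rw [← pow_mul, Nat.mul_comm]
      _ ≤ _ := e1
  have hNα : (N:ℝ)^α ≠ 0 := ne_of_gt (Real.rpow_pos_of_pos hNR α)
  have htail : (m:ℝ)*s*(N:ℝ)*r^K ≤ (16*m/(σ*c^2*δ^2)) * ((N:ℝ)^α/N) := by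
    have hrK : r^K ≤ ((δ*(N:ℝ)*(s*c)/4)^2)⁻¹ := by
      rw [hr, inv_pow]
      exact inv_anti₀ (by positivity) (le_trans hpow2 hKpow)
    calc (m:ℝ)*s*(N:ℝ)*r^K ≤ (m:ℝ)*s*(N:ℝ)*((δ*(N:ℝ)*(s*c)/4)^2)⁻¹ :=
        mul_le_mul_of_nonneg_left hrK (by positivity)
      _ = (16*m/(σ*c^2*δ^2)) * ((N:ℝ)^α/N) := by
        rw [hs]
        field_simp
        ring
  -- assemble
  calc (∑ ℓ ∈ Finset.Icc 1 N, ∏ j ∈ Finset.Icc ℓ (N-1),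
      (1 + s * ((1 - ((j:ℝ)/N)^m)/(1 - (j:ℝ)/N)))⁻¹) * ((m:ℝ)*s)
      ≤ ((∑ i ∈ range N, r^i) + (N:ℝ) * r^K) * ((m:ℝ)*s) :=
        mul_le_mul_of_nonneg_right hS (by positivity)
    _ = ((m:ℝ)*s)*(∑ i ∈ range N, r^i) + (m:ℝ)*s*(N:ℝ)*r^K := by ring
    _ ≤ ((m:ℝ)*s)*((1+s*c)/(s*c)) + (16*m/(σ*c^2*δ^2)) * ((N:ℝ)^α/N) :=
        add_le_add (mul_le_mul_of_nonneg_left hA' (by positivity)) htail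
    _ = ((m:ℝ)/c)*(1+s*c) + (16*m/(σ*c^2*δ^2)) * ((N:ℝ)^α/N) := by
        have hcne : c ≠ 0 := ne_of_gt hc0
        have hsne : s ≠ 0 := ne_of_gt hs0
        field_simp

lemma low_aux (m : ℕ) (hm : 1 ≤ m) (σ α : ℝ) (hσ : 0 < σ) (N : ℕ) (hN : 1 ≤ N) :
    1 - (1 + (m:ℝ)*σ*(N:ℝ)^(1-α))⁻¹ ≤ 1 - ((1 + σ/(N:ℝ)^α*(m:ℝ))⁻¹)^N := by
  have hNR : (0:ℝ) < N := by exact_mod_cast hN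
  have hNα : (0:ℝ) < (N:ℝ)^α := Real.rpow_pos_of_pos hNR α
  have hsm0 : (0:ℝ) ≤ σ/(N:ℝ)^α*(m:ℝ) := by positivity
  have hb := one_add_mul_le_pow (show (-2:ℝ) ≤ σ/(N:ℝ)^α*(m:ℝ) by linarith) N
  have heq : 1 + (N:ℝ)*(σ/(N:ℝ)^α*(m:ℝ)) = 1 + (m:ℝ)*σ*(N:ℝ)^(1-α) := by
    rw [Real.rpow_sub hNR, Real.rpow_one]
    field_simp
  rw [heq] at hb
  have hpos : (0:ℝ) < 1 + (m:ℝ)*σ*(N:ℝ)^(1-α) := by positivity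
  have := inv_anti₀ hpos hb
  rw [← inv_pow] at this
  linarith

/-- Haldane's formula in the moderate selection regime: with
`q_k = (1 + (σ/N^α)(1-(k/N)^m)/(1-k/N))⁻¹`, the fixation probability of a single fit
mutant, `1 - h_∞(N-1) = 1/∑_{ℓ=1}^N ∏_{j=ℓ}^{N-1} q_j`, satisfies
`1 - h_∞(N-1) = (mσ/N^α)(1+o(1))` as `N → ∞`. -/
theorem haldane_moderate_selection (m : ℕ) (hm : 1 ≤ m) (σ α : ℝ)
    (hσ : 0 < σ) (hα0 : 0 < α) (hα1 : α < 1) :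
    Tendsto
      (fun N : ℕ =>
        (1 / ∑ ℓ ∈ Finset.Icc 1 N, ∏ j ∈ Finset.Icc ℓ (N - 1),
            (1 + (σ / (N : ℝ) ^ α)
                * ((1 - ((j : ℝ) / N) ^ m) / (1 - (j : ℝ) / N)))⁻¹)
          * ((N : ℝ) ^ α / ((m : ℝ) * σ)))
      atTop (nhds 1) := by
  have hmR : (1:ℝ) ≤ m := by exact_mod_cast hm
  have hm0 : (0:ℝ) < m := by linarith
  set T : ℕ → ℝ := fun N =>
    (∑ ℓ ∈ Finset.Icc 1 N, ∏ j ∈ Finset.Icc ℓ (N - 1),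
      (1 + (σ / (N : ℝ) ^ α) * ((1 - ((j : ℝ) / N) ^ m) / (1 - (j : ℝ) / N)))⁻¹)
      * ((m:ℝ) * (σ/(N:ℝ)^α)) with hT
  have hnat : Tendsto (fun N : ℕ => (N:ℝ)) atTop atTop := tendsto_natCast_atTop_atTop
  have hTlim : Tendsto T atTop (nhds 1) := by
    rw [tendsto_order]
    constructor
    · -- lower bound
      intro a ha
      have l1 : Tendsto (fun N:ℕ => (m:ℝ)*σ*(N:ℝ)^(1-α)) atTop atTop :=
        Tendsto.const_mul_atTop (by positivity)
          ((tendsto_rpow_atTop (by linarith)).comp hnat)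
      have l2 : Tendsto (fun N:ℕ => 1 + (m:ℝ)*σ*(N:ℝ)^(1-α)) atTop atTop :=
        tendsto_atTop_add_const_left _ 1 l1
      have l3 : Tendsto (fun N:ℕ => (1 + (m:ℝ)*σ*(N:ℝ)^(1-α))⁻¹) atTop (nhds 0) :=
        l2.inv_tendsto_atTop
      have l4 : Tendsto (fun N:ℕ => 1 - (1 + (m:ℝ)*σ*(N:ℝ)^(1-α))⁻¹) atTop (nhds 1) := by
        simpa using tendsto_const_nhds.sub l3
      filter_upwards [l4.eventually (eventually_gt_nhds ha), eventually_ge_atTop 1]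
        with N h1 h2
      exact lt_of_lt_of_le h1 (le_trans (low_aux m hm σ α hσ N h2)
        (S_lower m hm σ α hσ N h2))
    · -- upper bound
      intro b hb
      set δ : ℝ := (b-1)/((b+1)*(m:ℝ)) with hδ
      have hδ0 : 0 < δ := by
        apply div_pos (by linarith) (by positivity)
      have hmδ : (m:ℝ)*δ = (b-1)/(b+1) := by
        rw [hδ]; field_simp
      have hδm : (m:ℝ)*δ < 1 := by
        rw [hmδ]; rw [div_lt_one (by linarith)]; linarith
      set c : ℝ := (m:ℝ)*(1-(m:ℝ)*δ) with hc
      have hc0 : 0 < c := by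
        apply mul_pos hm0 (by linarith)
      have hb1 : (0:ℝ) < b + 1 := by linarith
      have h2b : (1:ℝ) - (b-1)/(b+1) = 2/(b+1) := by
        field_simp
        norm_num
      have hvb' : (m:ℝ)/c = (b+1)/2 := by
        rw [hc, hmδ, h2b]
        rw [div_eq_div_iff (by positivity) (by norm_num)]
        field_simp
      have hvb : (m:ℝ)/c < b := by rw [hvb']; linarith
      set C : ℝ := 16*m/(σ*c^2*δ^2) with hC
      -- limit of upper bound function
      have hs0 : Tendsto (fun N:ℕ => σ/(N:ℝ)^α) atTop (nhds 0) :=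
        tendsto_const_nhds.div_atTop ((tendsto_rpow_atTop hα0).comp hnat)
      have hNα1 : Tendsto (fun N:ℕ => (N:ℝ)^α/(N:ℝ)) atTop (nhds 0) := by
        have e1 : Tendsto (fun N:ℕ => (N:ℝ)^(α-1)) atTop (nhds 0) := by
          have := (tendsto_rpow_neg_atTop (show 0 < 1-α by linarith)).comp hnat
          simpa [neg_sub, Function.comp_def] using this
        apply e1.congr'
        filter_upwards [eventually_ge_atTop 1] with N hN
        have hNR : (0:ℝ) < N := by exact_mod_cast hN
        rw [Real.rpow_sub hNR, Real.rpow_one]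
      have hU : Tendsto (fun N:ℕ =>
          ((m:ℝ)/c)*(1+(σ/(N:ℝ)^α)*c) + C*((N:ℝ)^α/(N:ℝ))) atTop
          (nhds ((m:ℝ)/c)) := by
        have u1 : Tendsto (fun N:ℕ => ((m:ℝ)/c)*(1+(σ/(N:ℝ)^α)*c)) atTop
            (nhds (((m:ℝ)/c)*(1+0*c))) :=
          tendsto_const_nhds.mul (tendsto_const_nhds.add (hs0.mul_const c))
        have u2 : Tendsto (fun N:ℕ => C*((N:ℝ)^α/(N:ℝ))) atTop (nhds (C*0)) :=
          hNα1.const_mul C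
        have := u1.add u2
        simpa using this
      have hδN : Tendsto (fun N:ℕ => δ*(N:ℝ)) atTop atTop :=
        Tendsto.const_mul_atTop hδ0 hnat
      filter_upwards [hU.eventually (eventually_lt_nhds hvb), eventually_ge_atTop 1,
        hδN.eventually_ge_atTop 4] with N h1 h2 h3
      have hKN : (⌊δ*N⌋₊ : ℕ) ≤ N - 1 := by
        have hNR : (0:ℝ) < N := by exact_mod_cast h2
        have hδ1 : δ < 1 := by nlinarith
        have : (⌊δ*(N:ℝ)⌋₊ : ℕ) < N := by
          rw [Nat.floor_lt (by positivity)]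
          nlinarith
        omega
      exact lt_of_le_of_lt (S_upper m hm σ α hσ δ hδ0 hδm N h2 hKN h3) h1
  -- convert goal
  have heq : (fun N : ℕ =>
      (1 / ∑ ℓ ∈ Finset.Icc 1 N, ∏ j ∈ Finset.Icc ℓ (N - 1),
          (1 + (σ / (N : ℝ) ^ α)
              * ((1 - ((j : ℝ) / N) ^ m) / (1 - (j : ℝ) / N)))⁻¹)
        * ((N : ℝ) ^ α / ((m : ℝ) * σ))) = fun N => (T N)⁻¹ := by
    funext N
    rw [hT]
    simp only [one_div, mul_inv, inv_div, inv_inv]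
    ring
  rw [heq]
  have := hTlim.inv₀ (one_ne_zero)
  simpa using this
end

section
/- Let X be a continuous-time birth-death process on {0,…,N} with birth rates λ_x (x < N) and death rates μ_x (x > 0), λ_N = μ_0 = 0, and let X^S be the birth-death process on {0,…,N+1} with death rates μ*_x = λ_{x-1} for 1 ≤ x ≤ N+1 and birth rates λ*_x = μ_x for 0 ≤ x ≤ N. Then for the duality function H(x, x*) = 1_{x ≥ x*}, the generators satisfy 𝒜_X H(·, x*)(x) = 𝒜_{X^S} H(x, ·)(x*) for all x ∈ {0,…,N}, x* ∈ {0,…,N+1}; consequently P(X_t ≥ x* | X_0 = x) = P(x ≥ X^S_t | X^S_0 = x*) for all t ≥ 0. -/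
open Matrix

/-- Generator of a birth-death chain on `{0,…,N}` with birth rates `birth x` and
death rates `death x` (as a `(N+1)×(N+1)` rate matrix, row = current state). -/
noncomputable def bdGenerator (N : ℕ) (birth death : ℕ → ℝ) :
    Matrix (Fin (N + 1)) (Fin (N + 1)) ℝ :=
  Matrix.of fun x y =>
    if y.val = x.val + 1 then birth x.val
    else if x.val = y.val + 1 then death x.val
    else if x = y then -(birth x.val + death x.val)
    else 0

private lemma sum_ite_val {M : ℕ} (k : ℕ) (g : Fin M → ℝ) :
    (∑ y : Fin M, if y.val = k then g y else 0) = if h : k < M then g ⟨k, h⟩ else 0 := by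
  split_ifs with h
  · rw [Finset.sum_eq_single ⟨k, h⟩]
    · simp
    · intro y _ hy
      rw [if_neg]
      exact fun hc => hy (Fin.ext hc)
    · simp
  · apply Finset.sum_eq_zero
    intro y _
    rw [if_neg]
    have := y.isLt
    omega

/-- Row action of the birth-death generator on a function. -/
private lemma bd_row (M : ℕ) (b d : ℕ → ℝ) (hd0 : d 0 = 0) (x : Fin (M + 1))
    (f : Fin (M + 1) → ℝ) :
    ∑ y : Fin (M + 1), bdGenerator M b d x y * f y
      = b x.val * (if h : x.val + 1 < M + 1 then f ⟨x.val + 1, h⟩ else 0)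
        + d x.val * f ⟨x.val - 1, by omega⟩
        - (b x.val + d x.val) * f x := by
  have hsplit : ∀ y : Fin (M + 1), bdGenerator M b d x y * f y
      = (if y.val = x.val + 1 then b x.val * f y else 0)
        + (if x.val = y.val + 1 then d x.val * f y else 0)
        + (if x = y then -(b x.val + d x.val) * f y else 0) := by
    intro y
    simp only [bdGenerator, Matrix.of_apply, Fin.ext_iff]
    split_ifs <;> first | omega | ring1
  rw [Finset.sum_congr rfl (fun y _ => hsplit y), Finset.sum_add_distrib,
    Finset.sum_add_distrib]
  have h1 : (∑ y : Fin (M + 1), if y.val = x.val + 1 then b x.val * f y else 0)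
      = b x.val * (if h : x.val + 1 < M + 1 then f ⟨x.val + 1, h⟩ else 0) := by
    rw [sum_ite_val]
    split_ifs <;> simp
  have h3 : (∑ y : Fin (M + 1), if x = y then -(b x.val + d x.val) * f y else 0)
      = -(b x.val + d x.val) * f x := by
    rw [Finset.sum_ite_eq]
    simp
  rw [h1, h3]
  rcases Nat.eq_zero_or_pos x.val with hx | hx
  · have h2 : (∑ y : Fin (M + 1), if x.val = y.val + 1 then d x.val * f y else 0) = 0 := by
      apply Finset.sum_eq_zero
      intro y _
      rw [if_neg]
      omega
    have hdx : d x.val = 0 := by rw [hx]; exact hd0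
    rw [h2, hdx]
    ring1
  · have h2 : (∑ y : Fin (M + 1), if x.val = y.val + 1 then d x.val * f y else 0)
        = d x.val * f ⟨x.val - 1, by omega⟩ := by
      rw [Finset.sum_congr rfl (fun y _ => by
        rw [show (if x.val = y.val + 1 then d x.val * f y else 0)
            = (if y.val = x.val - 1 then d x.val * f y else 0) from by
          split_ifs <;> first | rfl | omega]),
        sum_ite_val]
      rw [dif_pos (by omega)]
    rw [h2]
    ring1

private lemma lhs_eval (N : ℕ) (lam mu : ℕ → ℝ) (hlamN : lam N = 0) (hmu0 : mu 0 = 0)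
    (x : Fin (N + 1)) (xs : Fin (N + 2)) :
    ∑ y : Fin (N + 1), bdGenerator N lam mu x y * (if xs.val ≤ y.val then (1 : ℝ) else 0)
      = if xs.val = x.val then -(mu x.val)
        else if xs.val = x.val + 1 then lam x.val else 0 := by
  rw [bd_row N lam mu hmu0 x _]
  have hx := x.isLt
  have hxs := xs.isLt
  simp only [Fin.val_mk] at *
  split_ifs with h1 h2 h3 h4 h5 h6 h7 h8 h9 h10 h11 h12 h13 h14 h15 <;>
    first
      | ring1
      | omega
      | (exfalso; omega)
      | (have hxN : x.val = N := by omega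
         simp only [hxN, hlamN]; ring1)
      | (have hxs0 : xs.val = x.val := by omega
         simp only [hxs0]; ring1)
      | (have h0 : x.val = 0 := by omega
         simp only [h0, hmu0]; ring1)
      | (have hl : lam x.val = 0 := by
           have h : x.val = N := by omega
           rw [h, hlamN]
         have hm : mu x.val = 0 := by
           have h : x.val = 0 := by omega
           rw [h, hmu0]
         simp only [hl, hm]; ring1)

private lemma rhs_eval (N : ℕ) (lam mu : ℕ → ℝ)
    (x : Fin (N + 1)) (xs : Fin (N + 2)) :
    ∑ ys : Fin (N + 2), bdGenerator (N + 1) (fun x => if x ≤ N then mu x else 0)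
        (fun x => if x = 0 then 0 else lam (x - 1)) xs ys
        * (if ys.val ≤ x.val then (1 : ℝ) else 0)
      = if xs.val = x.val then -(mu x.val)
        else if xs.val = x.val + 1 then lam x.val else 0 := by
  rw [bd_row (N + 1) _ _ (by simp) xs _]
  have hx := x.isLt
  have hxs := xs.isLt
  simp only [Fin.val_mk] at *
  split_ifs with h1 h2 h3 h4 h5 h6 h7 h8 h9 h10 h11 h12 h13 h14 h15 <;>
    first
      | ring1
      | omega
      | (exfalso; omega)
      | (have he : xs.val = x.val := by omega
         simp only [he]; ring1)
      | (have he : xs.val = x.val + 1 := by omega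
         simp only [he, Nat.add_sub_cancel]; ring1)

/-- If `A * H = H * B` then the exponentials intertwine: `exp A * H = H * exp B`. -/
private lemma exp_intertwine {a b : Type} [Fintype a] [DecidableEq a] [Fintype b]
    [DecidableEq b] (A : Matrix a a ℝ) (B : Matrix b b ℝ) (H : Matrix a b ℝ)
    (hAB : A * H = H * B) :
    NormedSpace.exp A * H = H * NormedSpace.exp B := by
  letI : SeminormedRing (Matrix a a ℝ) := Matrix.linftyOpSemiNormedRing
  letI : NormedRing (Matrix a a ℝ) := Matrix.linftyOpNormedRing
  letI : NormedAlgebra ℝ (Matrix a a ℝ) := Matrix.linftyOpNormedAlgebra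
  letI : SeminormedRing (Matrix b b ℝ) := Matrix.linftyOpSemiNormedRing
  letI : NormedRing (Matrix b b ℝ) := Matrix.linftyOpNormedRing
  letI : NormedAlgebra ℝ (Matrix b b ℝ) := Matrix.linftyOpNormedAlgebra
  have hpow : ∀ n : ℕ, A ^ n * H = H * B ^ n := by
    intro n
    induction n with
    | zero => simp
    | succ n ih =>
      rw [pow_succ', pow_succ', Matrix.mul_assoc, ih, ← Matrix.mul_assoc, hAB,
        Matrix.mul_assoc]
  -- right multiplication by H as a continuous linear map
  let L1 : Matrix a a ℝ →L[ℝ] Matrix a b ℝ :=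
    { toFun := fun X => X * H
      map_add' := fun X Y => Matrix.add_mul X Y H
      map_smul' := fun c X => Matrix.smul_mul c X H
      cont := Continuous.matrix_mul continuous_id continuous_const }
  let L2 : Matrix b b ℝ →L[ℝ] Matrix a b ℝ :=
    { toFun := fun X => H * X
      map_add' := fun X Y => Matrix.mul_add H X Y
      map_smul' := fun c X => (Matrix.mul_smul H c X)
      cont := Continuous.matrix_mul continuous_const continuous_id }
  have hsumA : Summable fun n : ℕ => ((n.factorial : ℝ)⁻¹) • A ^ n :=
    NormedSpace.expSeries_summable' (𝕂 := ℝ) A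
  have hsumB : Summable fun n : ℕ => ((n.factorial : ℝ)⁻¹) • B ^ n :=
    NormedSpace.expSeries_summable' (𝕂 := ℝ) B
  have e1 : NormedSpace.exp A * H = L1 (NormedSpace.exp A) := rfl
  have e2 : H * NormedSpace.exp B = L2 (NormedSpace.exp B) := rfl
  rw [e1, e2, NormedSpace.exp_eq_tsum (𝕂 := ℝ), NormedSpace.exp_eq_tsum (𝕂 := ℝ), L1.map_tsum hsumA, L2.map_tsum hsumB]
  congr 1
  funext n
  show ((n.factorial : ℝ)⁻¹ • A ^ n) * H = H * ((n.factorial : ℝ)⁻¹ • B ^ n)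
  rw [Matrix.smul_mul, Matrix.mul_smul, hpow]

/-- Siegmund duality for finite birth-death chains: with `X` a birth-death chain on
`{0,…,N}` (rates `λ_x, μ_x`, `λ_N = μ_0 = 0`) and `X^S` the chain on `{0,…,N+1}` with
birth rates `λ*_x = μ_x` (for `x ≤ N`) and death rates `μ*_x = λ_{x-1}` (for
`1 ≤ x ≤ N+1`), the generators satisfy `𝒜_X H(·,x*)(x) = 𝒜_{X^S} H(x,·)(x*)` for
`H(x,x*) = 1_{x ≥ x*}`, and consequently the semigroups `exp(tQ)` satisfy
`P(X_t ≥ x* | X_0 = x) = P(x ≥ X^S_t | X^S_0 = x*)` for all `t ≥ 0`. -/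
theorem siegmund_duality_birth_death (N : ℕ) (lam mu : ℕ → ℝ)
    (hlam : ∀ x, x < N → 0 ≤ lam x) (hmu : ∀ x, 0 < x → x ≤ N → 0 ≤ mu x)
    (hlamN : lam N = 0) (hmu0 : mu 0 = 0) :
    let Q : Matrix (Fin (N + 1)) (Fin (N + 1)) ℝ := bdGenerator N lam mu
    let QS : Matrix (Fin (N + 2)) (Fin (N + 2)) ℝ :=
      bdGenerator (N + 1) (fun x => if x ≤ N then mu x else 0)
        (fun x => if x = 0 then 0 else lam (x - 1))
    (∀ (x : Fin (N + 1)) (xs : Fin (N + 2)),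
        ∑ y : Fin (N + 1), Q x y * (if xs.val ≤ y.val then (1 : ℝ) else 0)
          = ∑ ys : Fin (N + 2), QS xs ys * (if ys.val ≤ x.val then (1 : ℝ) else 0)) ∧
    (∀ t : ℝ, 0 ≤ t → ∀ (x : Fin (N + 1)) (xs : Fin (N + 2)),
        ∑ y : Fin (N + 1),
            (NormedSpace.exp (t • Q)) x y * (if xs.val ≤ y.val then (1 : ℝ) else 0)
          = ∑ ys : Fin (N + 2),
              (NormedSpace.exp (t • QS)) xs ys * (if ys.val ≤ x.val then (1 : ℝ) else 0)) := by
  intro Q QS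
  set H : Matrix (Fin (N + 1)) (Fin (N + 2)) ℝ :=
    Matrix.of fun x xs => if xs.val ≤ x.val then (1 : ℝ) else 0 with hH
  have part1 : ∀ (x : Fin (N + 1)) (xs : Fin (N + 2)),
      ∑ y : Fin (N + 1), Q x y * (if xs.val ≤ y.val then (1 : ℝ) else 0)
        = ∑ ys : Fin (N + 2), QS xs ys * (if ys.val ≤ x.val then (1 : ℝ) else 0) := by
    intro x xs
    rw [lhs_eval N lam mu hlamN hmu0 x xs, rhs_eval N lam mu x xs]
  refine ⟨part1, ?_⟩
  intro t _ x xs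
  have hmat : Q * H = H * QSᵀ := by
    ext x xs
    rw [Matrix.mul_apply, Matrix.mul_apply]
    calc ∑ y : Fin (N + 1), Q x y * H y xs
        = ∑ ys : Fin (N + 2), QS xs ys * (if ys.val ≤ x.val then (1 : ℝ) else 0) :=
          part1 x xs
      _ = ∑ ys : Fin (N + 2), H x ys * QSᵀ ys xs := by
          apply Finset.sum_congr rfl
          intro ys _
          simp only [hH, Matrix.transpose_apply, Matrix.of_apply]
          ring1
  have hmat' : (t • Q) * H = H * (t • QSᵀ) := by
    rw [Matrix.smul_mul, Matrix.mul_smul, hmat]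
  have hexp := exp_intertwine (t • Q) (t • QSᵀ) H hmat'
  have htr : NormedSpace.exp (t • QSᵀ) = (NormedSpace.exp (t • QS))ᵀ := by
    rw [← Matrix.transpose_smul, Matrix.exp_transpose]
  rw [htr] at hexp
  calc ∑ y : Fin (N + 1),
        (NormedSpace.exp (t • Q)) x y * (if xs.val ≤ y.val then (1 : ℝ) else 0)
      = (NormedSpace.exp (t • Q) * H) x xs := by
        rw [Matrix.mul_apply]
        apply Finset.sum_congr rfl
        intro y _
        simp only [hH, Matrix.of_apply]
    _ = (H * (NormedSpace.exp (t • QS))ᵀ) x xs := by rw [hexp]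
    _ = ∑ ys : Fin (N + 2),
          (NormedSpace.exp (t • QS)) xs ys * (if ys.val ≤ x.val then (1 : ℝ) else 0) := by
        rw [Matrix.mul_apply]
        apply Finset.sum_congr rfl
        intro ys _
        simp only [hH, Matrix.transpose_apply, Matrix.of_apply]
        ring1
end
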